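/- Let T be a band-limited operator with band limit b. If T is summable and T* has band limit b as well, then T* is summable, with Σ_n ‖T*|_{H_n}‖ ≤ (2b+1) Σ_m ‖T|_{H_m}‖. -/

import Mathlib

open scoped ComplexOrder

variable {H : Type*} [NormedAddCommGroup H] [InnerProductSpace ℂ H] [CompleteSpace H]

/-- `T` is band-limited (with respect to the orthogonal decomposition `H = ⊕ₙ Hₙ` given by the
projections `P n`): there is a band limit `b` with `T(Hₙ) ⊆ ⊕_{|m-n| ≤ b} Hₘ` for all `n`. -/
def BandLimited (P : ℕ → H →L[ℂ] H) (T : H →L[ℂ] H) : Prop :=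
  ∃ b : ℕ, ∀ m n : ℕ, (n + b < m ∨ m + b < n) → (P m).comp (T.comp (P n)) = 0

/-- `T` is summable: `Σₙ ‖T|_{Hₙ}‖ < ∞`. -/
def SummableRestrictions (P : ℕ → H →L[ℂ] H) (T : H →L[ℂ] H) : Prop :=
  Summable fun n => ‖T.comp (P n)‖

/-- `T` is a summable band-limited operator. -/
def SBL (P : ℕ → H →L[ℂ] H) (T : H →L[ℂ] H) : Prop :=
  BandLimited P T ∧ SummableRestrictions P T

/-- If `T` is a summable band-limited operator with band limit `b`, and `T*` also has band
limit `b`, then `T*` is summable, with `Σₙ ‖T*|_{Hₙ}‖ ≤ (2b+1) Σₘ ‖T|_{Hₘ}‖`. -/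
theorem adjoint_summable (P : ℕ → H →L[ℂ] H)
    (hsa : ∀ n, IsSelfAdjoint (P n)) (hidem : ∀ n, P n * P n = P n)
    (horth : ∀ m n, m ≠ n → P m * P n = 0)
    (htotal : ∀ x : H, HasSum (fun n => P n x) x)
    (T : H →L[ℂ] H) (b : ℕ)
    (hb : ∀ m n : ℕ, (n + b < m ∨ m + b < n) → (P m).comp (T.comp (P n)) = 0)
    (hb' : ∀ m n : ℕ, (n + b < m ∨ m + b < n) → (P m).comp ((star T).comp (P n)) = 0)
    (hsum : Summable fun n => ‖T.comp (P n)‖) :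
    (Summable fun n => ‖(star T).comp (P n)‖) ∧
    ∑' n, ‖(star T).comp (P n)‖ ≤ (2 * b + 1) * ∑' m, ‖T.comp (P m)‖ := by
  classical
  set a : ℕ → ℝ := fun m => ‖T.comp (P m)‖ with ha
  have ha0 : ∀ m, 0 ≤ a m := fun m => norm_nonneg _
  set g : ℕ → ℝ := fun m => if b ≤ m then a (m - b) else 0 with hgdef
  have hg0 : ∀ m, 0 ≤ g m := by
    intro m
    simp only [hgdef]
    split
    · exact ha0 _
    · exact le_refl _
  have hgb : (fun m => g (m + b)) = a := by
    funext m
    simp [hgdef]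
  have hg : Summable g := by
    rw [← summable_nat_add_iff b, hgb]
    exact hsum
  have hgt : ∑' m, g m = ∑' m, a m := by
    have h1 := hg.sum_add_tsum_nat_add b
    have h2 : (∑ i ∈ Finset.range b, g i) = 0 := by
      apply Finset.sum_eq_zero
      intro i hi
      rw [Finset.mem_range] at hi
      simp [hgdef, Nat.not_le.mpr hi]
    have h3 : (fun i => g (i + b)) = a := hgb
    rw [h2, h3, zero_add] at h1
    exact h1.symm
  -- Norm of projections is at most 1
  have hPle : ∀ n, ‖P n‖ ≤ 1 := by
    intro n
    have h1 : ‖P n‖ * ‖P n‖ = ‖P n‖ := by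
      calc ‖P n‖ * ‖P n‖ = ‖star (P n) * P n‖ := (CStarRing.norm_star_mul_self).symm
      _ = ‖P n * P n‖ := by rw [(hsa n).star_eq]
      _ = ‖P n‖ := by rw [hidem n]
    nlinarith [norm_nonneg (P n)]
  -- Each block of the adjoint is bounded by ‖T.comp (P m)‖
  have hterm : ∀ m n : ℕ, ‖(P m).comp ((star T).comp (P n))‖ ≤ a m := by
    intro m n
    have hstar : (P m).comp ((star T).comp (P n)) = star ((P n).comp (T.comp (P m))) := by
      have : (P m).comp ((star T).comp (P n)) = P m * (star T * P n) := rfl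
      rw [this]
      have : (P n).comp (T.comp (P m)) = P n * (T * P m) := rfl
      rw [this]
      simp only [star_mul, (hsa m).star_eq, (hsa n).star_eq, mul_assoc]
    calc ‖(P m).comp ((star T).comp (P n))‖
        = ‖star ((P n).comp (T.comp (P m)))‖ := by rw [hstar]
      _ = ‖(P n).comp (T.comp (P m))‖ := norm_star _
      _ ≤ ‖P n‖ * ‖T.comp (P m)‖ := ContinuousLinearMap.opNorm_comp_le _ _
      _ ≤ 1 * ‖T.comp (P m)‖ := by
          apply mul_le_mul_of_nonneg_right (hPle n) (norm_nonneg _)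
      _ = a m := by rw [one_mul]
  -- Decomposition of (star T).comp (P n) into its blocks
  have hdecomp : ∀ n : ℕ, (star T).comp (P n)
      = ∑ m ∈ Finset.Icc (n - b) (n + b), (P m).comp ((star T).comp (P n)) := by
    intro n
    ext x
    have hy := htotal ((star T) (P n x))
    have h0 : ∀ m ∉ Finset.Icc (n - b) (n + b), P m ((star T) (P n x)) = 0 := by
      intro m hm
      have hz : (P m).comp ((star T).comp (P n)) = 0 := by
        apply hb' m n
        rw [Finset.mem_Icc] at hm
        omega
      calc P m ((star T) (P n x)) = ((P m).comp ((star T).comp (P n))) x := rfl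
        _ = 0 := by rw [hz]; rfl
    have heq := (hasSum_sum_of_ne_finset_zero h0).unique hy
    simp only [ContinuousLinearMap.coe_comp', Function.comp_apply,
      ContinuousLinearMap.coe_sum', Finset.sum_apply]
    exact heq.symm
  -- Pointwise key bound
  have key : ∀ n : ℕ, ‖(star T).comp (P n)‖ ≤ ∑ j ∈ Finset.range (2 * b + 1), g (n + j) := by
    intro n
    have hIcc : ∀ m ∈ Finset.Icc (n - b) (n + b), a m = g (n + (m + b - n)) := by
      intro m hm
      rw [Finset.mem_Icc] at hm
      have h1 : n + (m + b - n) = m + b := by omega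
      rw [h1]
      simp [hgdef]
    calc ‖(star T).comp (P n)‖
        = ‖∑ m ∈ Finset.Icc (n - b) (n + b), (P m).comp ((star T).comp (P n))‖ := by
          rw [← hdecomp n]
      _ ≤ ∑ m ∈ Finset.Icc (n - b) (n + b), ‖(P m).comp ((star T).comp (P n))‖ :=
          norm_sum_le _ _
      _ ≤ ∑ m ∈ Finset.Icc (n - b) (n + b), a m :=
          Finset.sum_le_sum (fun m _ => hterm m n)
      _ = ∑ m ∈ Finset.Icc (n - b) (n + b), g (n + (m + b - n)) :=
          Finset.sum_congr rfl hIcc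
      _ = ∑ j ∈ (Finset.Icc (n - b) (n + b)).image (fun m => m + b - n), g (n + j) := by
          rw [Finset.sum_image]
          intro m1 hm1 m2 hm2 hEq
          simp only [Finset.mem_coe, Finset.mem_Icc] at hm1 hm2 hEq
          omega
      _ ≤ ∑ j ∈ Finset.range (2 * b + 1), g (n + j) := by
          apply Finset.sum_le_sum_of_subset_of_nonneg
          · intro j hj
            rw [Finset.mem_image] at hj
            obtain ⟨m, hm, hjm⟩ := hj
            rw [Finset.mem_Icc] at hm
            rw [Finset.mem_range]
            omega
          · intro j _ _
            exact hg0 _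
  have hGsummable : ∀ j : ℕ, Summable (fun n => g (n + j)) :=
    fun j => (summable_nat_add_iff j).2 hg
  have hG : Summable (fun n => ∑ j ∈ Finset.range (2 * b + 1), g (n + j)) :=
    summable_sum (fun j _ => hGsummable j)
  have hS : Summable (fun n => ‖(star T).comp (P n)‖) :=
    Summable.of_nonneg_of_le (fun n => norm_nonneg _) key hG
  refine ⟨hS, ?_⟩
  have hshift : ∀ j : ℕ, ∑' n, g (n + j) ≤ ∑' m, g m := by
    intro j
    have h1 := hg.sum_add_tsum_nat_add j
    have h2 : 0 ≤ ∑ i ∈ Finset.range j, g i := Finset.sum_nonneg (fun i _ => hg0 i)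
    linarith
  calc ∑' n, ‖(star T).comp (P n)‖
      ≤ ∑' n, ∑ j ∈ Finset.range (2 * b + 1), g (n + j) := hS.tsum_le_tsum key hG
    _ = ∑ j ∈ Finset.range (2 * b + 1), ∑' n, g (n + j) :=
        Summable.tsum_finsetSum (fun j _ => hGsummable j)
    _ ≤ ∑ j ∈ Finset.range (2 * b + 1), ∑' m, g m :=
        Finset.sum_le_sum (fun j _ => hshift j)
    _ = (2 * b + 1) * ∑' m, a m := by
        rw [Finset.sum_const, Finset.card_range, hgt, nsmul_eq_mul]
        push_cast
        ring
    _ = (2 * b + 1) * ∑' m, ‖T.comp (P m)‖ := rfl
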